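/- Let φ₀, φ₁ be real numbers with δ = φ₁ − φ₀ > 0, let g(A) = Y(2A, δ−A, φ₀), and for A > 0 set θ = (δ−A)²/(4A). If 0 < A ≤ δ then 2√A · g(A) = p(θ), and if A ≥ δ then 2√A · g(A) = q(θ). -/

import Mathlib

open Real

/-- `Y a b c = ∫₀¹ sin(a τ²/2 + b τ + c) dτ` -/
noncomputable def Y (a b c : ℝ) : ℝ := ∫ τ in (0:ℝ)..1, Real.sin (a * τ ^ 2 / 2 + b * τ + c)

/-- `p φ₀ δ θ = ∫_θ^{θ+δ} sin(u + φ₀ - θ)/√u du` -/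
noncomputable def p (φ₀ δ θ : ℝ) : ℝ := ∫ u in θ..(θ + δ), Real.sin (u + φ₀ - θ) / Real.sqrt u

/-- `q φ₀ δ θ = p φ₀ δ θ + 2 ∫₀^θ sin(u + φ₀ - θ)/√u du` -/
noncomputable def q (φ₀ δ θ : ℝ) : ℝ :=
  p φ₀ δ θ + 2 * ∫ u in (0:ℝ)..θ, Real.sin (u + φ₀ - θ) / Real.sqrt u

open MeasureTheory Set intervalIntegral

lemma key_aux (A c k a b : ℝ) (hA : 0 < A) (hab : a ≤ b) (hac : 0 ≤ a + c) :
    IntervalIntegrable (fun u => Real.sin (u + k) / Real.sqrt u) volume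
      (A * (a + c) ^ 2) (A * (b + c) ^ 2) ∧
    ∫ u in (A * (a + c) ^ 2)..(A * (b + c) ^ 2), Real.sin (u + k) / Real.sqrt u
      = 2 * Real.sqrt A * ∫ t in a..b, Real.sin (A * (t + c) ^ 2 + k) := by
  set f : ℝ → ℝ := fun t => A * (t + c) ^ 2 with hf
  set g : ℝ → ℝ := fun u => Real.sin (u + k) / Real.sqrt u with hg
  have hbc : 0 ≤ b + c := by linarith
  have hfab : f a ≤ f b := by
    have : (a + c) ^ 2 ≤ (b + c) ^ 2 := by nlinarith
    exact mul_le_mul_of_nonneg_left this hA.le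
  have hderiv : ∀ t ∈ Ioo a b, HasDerivWithinAt f (2 * A * (t + c)) (Ioo a b) t := by
    intro t ht
    have : HasDerivAt f (A * (2 * (t + c) ^ 1 * 1)) t :=
      (((hasDerivAt_id t).add_const c).pow 2).const_mul A
    exact this.hasDerivWithinAt.congr_deriv (by ring)
  have hmono : StrictMonoOn f (Ioo a b) := by
    intro x hx y hy hxy
    have hxc : 0 ≤ x + c := by have := hx.1; linarith
    have : (x + c) ^ 2 < (y + c) ^ 2 := by nlinarith
    exact mul_lt_mul_of_pos_left this hA
  have hinj : InjOn f (Ioo a b) := hmono.injOn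
  have himg : f '' Ioo a b = Ioo (f a) (f b) := by
    ext u
    constructor
    · rintro ⟨t, ht, rfl⟩
      have htc : 0 ≤ t + c := by have := ht.1; linarith
      constructor
      · exact mul_lt_mul_of_pos_left (by nlinarith [ht.1] : (a + c) ^ 2 < (t + c) ^ 2) hA
      · exact mul_lt_mul_of_pos_left (by nlinarith [ht.2] : (t + c) ^ 2 < (b + c) ^ 2) hA
    · rintro ⟨h1, h2⟩
      simp only [hf] at h1 h2
      have hu0 : 0 ≤ u := le_of_lt (lt_of_le_of_lt (by positivity : (0:ℝ) ≤ A * (a+c)^2) h1)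
      refine ⟨Real.sqrt (u / A) - c, ⟨?_, ?_⟩, ?_⟩
      · have : (a + c) ^ 2 < u / A := by
          rw [lt_div_iff₀ hA]; nlinarith
        have := (Real.lt_sqrt hac).2 this
        linarith
      · have hb0 : 0 < b + c := by
          by_contra hb
          push_neg at hb
          have hbc0 : b + c = 0 := le_antisymm hb hbc
          rw [hbc0] at h2
          nlinarith [mul_nonneg hA.le (sq_nonneg (a + c))]
        have : u / A < (b + c) ^ 2 := by rw [div_lt_iff₀ hA]; nlinarith
        have := (Real.sqrt_lt' hb0).2 this
        linarith
      · have : Real.sqrt (u / A) - c + c = Real.sqrt (u / A) := by ring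
        simp only [hf, this, Real.sq_sqrt (by positivity : (0:ℝ) ≤ u / A)]
        field_simp
  have heqOn : ∀ t ∈ Ioo a b,
      |2 * A * (t + c)| • g (f t) = 2 * Real.sqrt A * Real.sin (A * (t + c) ^ 2 + k) := by
    intro t ht
    have htc : 0 < t + c := by have := ht.1; linarith
    have hsA : (0:ℝ) < Real.sqrt A := Real.sqrt_pos.2 hA
    have hsq : Real.sqrt (A * (t + c) ^ 2) = Real.sqrt A * (t + c) := by
      rw [Real.sqrt_mul hA.le, Real.sqrt_sq htc.le]
    simp only [hg, hf, smul_eq_mul]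
    rw [hsq, abs_of_pos (by positivity : (0:ℝ) < 2 * A * (t + c))]
    have hs0 : Real.sqrt A ≠ 0 := ne_of_gt hsA
    have htc0 : t + c ≠ 0 := ne_of_gt htc
    field_simp
    linear_combination (-1) * Real.sin (A * (t + c) ^ 2 + k) * Real.mul_self_sqrt hA.le
  have hcont : Continuous fun t => 2 * Real.sqrt A * Real.sin (A * (t + c) ^ 2 + k) :=
    continuous_const.mul (Real.continuous_sin.comp (by fun_prop))
  have hIntR : IntegrableOn (fun t => |2 * A * (t + c)| • g (f t)) (Ioo a b) volume := by
    refine (hcont.integrableOn_Ioc.mono_set Ioo_subset_Ioc_self).congr_fun ?_ measurableSet_Ioo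
    exact fun t ht => (heqOn t ht).symm
  have hIntL : IntegrableOn g (Ioo (f a) (f b)) volume := by
    rw [← himg]
    exact (integrableOn_image_iff_integrableOn_abs_deriv_smul measurableSet_Ioo hderiv hinj g).2
      hIntR
  constructor
  · rw [intervalIntegrable_iff_integrableOn_Ioo_of_le hfab]
    exact hIntL
  · rw [intervalIntegral.integral_of_le hfab, MeasureTheory.integral_Ioc_eq_integral_Ioo, ← himg,
      integral_image_eq_integral_abs_deriv_smul measurableSet_Ioo hderiv hinj g,
      setIntegral_congr_fun measurableSet_Ioo heqOn,
      ← MeasureTheory.integral_Ioc_eq_integral_Ioo,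
      ← intervalIntegral.integral_of_le hab, intervalIntegral.integral_const_mul]

theorem stmt1 (φ₀ φ₁ δ : ℝ) (hδdef : δ = φ₁ - φ₀) (hδ : 0 < δ)
    (A : ℝ) (hA : 0 < A) (θ : ℝ) (hθ : θ = (δ - A) ^ 2 / (4 * A)) :
    (A ≤ δ → 2 * Real.sqrt A * Y (2 * A) (δ - A) φ₀ = p φ₀ δ θ) ∧
    (δ ≤ A → 2 * Real.sqrt A * Y (2 * A) (δ - A) φ₀ = q φ₀ δ θ) := by
  set c : ℝ := (δ - A) / (2 * A) with hc
  have h2Ac : δ - A = 2 * A * c := by rw [hc]; field_simp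
  have hθc : θ = A * c ^ 2 := by
    rw [hθ, hc]; field_simp; ring
  have hθδ : θ + δ = A * (1 + c) ^ 2 := by nlinarith [h2Ac, hθc]
  have hY : Y (2 * A) (δ - A) φ₀
      = ∫ t in (0:ℝ)..1, Real.sin (A * (t + c) ^ 2 + (φ₀ - θ)) := by
    unfold Y
    apply intervalIntegral.integral_congr
    intro t _
    simp only
    have harg : 2 * A * t ^ 2 / 2 + (δ - A) * t + φ₀ = A * (t + c) ^ 2 + (φ₀ - θ) := by
      rw [h2Ac, hθc]; ring
    rw [harg]
  have hsin : ∀ u : ℝ, Real.sin (u + φ₀ - θ) = Real.sin (u + (φ₀ - θ)) := by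
    intro u; congr 1; ring
  constructor
  · intro hAδ
    have hc0 : (0:ℝ) ≤ 0 + c := by
      rw [zero_add, hc]; exact div_nonneg (by linarith) (by positivity)
    obtain ⟨-, heq⟩ := key_aux A c (φ₀ - θ) 0 1 hA zero_le_one hc0
    have e1 : A * (0 + c) ^ 2 = θ := by rw [hθc]; ring
    have e2 : A * (1 + c) ^ 2 = θ + δ := hθδ.symm
    rw [e1, e2] at heq
    rw [hY]
    unfold p
    simp only [hsin]
    exact heq.symm
  · intro hδA
    set m : ℝ := -c with hm
    have hm0 : (0:ℝ) ≤ m := by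
      rw [hm, hc, ← neg_div]; exact div_nonneg (by linarith) (by positivity)
    have hm1 : m ≤ 1 := by
      rw [hm, hc, ← neg_div, div_le_one (by positivity : (0:ℝ) < 2 * A)]
      linarith
    obtain ⟨hI1, heq1⟩ := key_aux A c (φ₀ - θ) m 1 hA hm1 (by rw [hm]; simp)
    obtain ⟨hI2, heq2⟩ := key_aux A 0 (φ₀ - θ) 0 m hA hm0 (by simp)
    have e0 : A * (m + c) ^ 2 = 0 := by rw [hm]; ring_nf
    have e1 : A * (1 + c) ^ 2 = θ + δ := hθδ.symm
    have e2 : A * (0 + 0) ^ 2 = 0 := by ring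
    have e3 : A * (m + 0) ^ 2 = θ := by rw [hm, hθc]; ring
    rw [e0, e1] at hI1 heq1
    rw [e2, e3] at hI2 heq2
    -- reflection for the [0,m] piece
    have hrefl : (∫ t in (0:ℝ)..m, Real.sin (A * (t + 0) ^ 2 + (φ₀ - θ)))
        = ∫ t in (0:ℝ)..m, Real.sin (A * (t + c) ^ 2 + (φ₀ - θ)) := by
      have := intervalIntegral.integral_comp_sub_left
        (a := (0:ℝ)) (b := m) (fun s => Real.sin (A * (s + 0) ^ 2 + (φ₀ - θ))) m
      rw [sub_self, sub_zero] at this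
      rw [← this]
      apply intervalIntegral.integral_congr
      intro t _
      simp only
      congr 2
      rw [hm]; ring
    rw [hrefl] at heq2
    -- split the [0,1] integral
    have hcont : Continuous fun t => Real.sin (A * (t + c) ^ 2 + (φ₀ - θ)) :=
      Real.continuous_sin.comp (by fun_prop)
    have hsplit : (∫ t in (0:ℝ)..m, Real.sin (A * (t + c) ^ 2 + (φ₀ - θ)))
        + (∫ t in m..(1:ℝ), Real.sin (A * (t + c) ^ 2 + (φ₀ - θ)))
        = ∫ t in (0:ℝ)..1, Real.sin (A * (t + c) ^ 2 + (φ₀ - θ)) :=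
      intervalIntegral.integral_add_adjacent_intervals
        (hcont.intervalIntegrable 0 m) (hcont.intervalIntegrable m 1)
    have hp : p φ₀ δ θ
        = (∫ u in (0:ℝ)..(θ + δ), Real.sin (u + (φ₀ - θ)) / Real.sqrt u)
          - ∫ u in (0:ℝ)..θ, Real.sin (u + (φ₀ - θ)) / Real.sqrt u := by
      unfold p
      simp only [hsin]
      exact (intervalIntegral.integral_interval_sub_left hI1 hI2).symm
    unfold q
    rw [hp, hY]
    simp only [hsin]
    rw [heq1, heq2, ← hsplit]
    ring
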